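/- One has h < m if and only if b_α > 0; moreover, if h < m then d(B_α) = m − h and hence q_α(B_α) = (b_α − m + h)/b_α < 1, a non-trivial confidence bound for the false discovery proportion of the Benjamini–Hochberg rejection set. -/

import Mathlib

open Finset

attribute [local instance] Classical.propDecidable

/-- The `i`-th smallest (1-indexed) element of the multiset of p-values `{p_j : j ∈ I}`. -/
noncomputable def pOrd {m : ℕ} (p : Fin m → ℝ) (I : Finset (Fin m)) (i : ℕ) : ℝ :=
  ((I.val.map p).sort (· ≤ ·)).getD (i - 1) 0

/-- The Simes local test rejects `H_I` (written `I ∈ 𝒰`) iff `I` is nonempty and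
`|I|·p_{(i:I)} ≤ i·α` for at least one `1 ≤ i ≤ |I|`. -/
def SimesU {m : ℕ} (α : ℝ) (p : Fin m → ℝ) (I : Finset (Fin m)) : Prop :=
  ∃ i, 1 ≤ i ∧ i ≤ I.card ∧ (I.card : ℝ) * pOrd p I i ≤ (i : ℝ) * α

/-- Closed testing rejects `H_I` (written `I ∈ 𝒳`) iff `J ∈ 𝒰` for every `J ⊇ I`. -/
def ClosedX {m : ℕ} (α : ℝ) (p : Fin m → ℝ) (I : Finset (Fin m)) : Prop :=
  ∀ J, I ⊆ J → SimesU α p J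

/-- `K_i = {r_{m−i+1},…,r_m}`: the `i` indices with largest p-values. -/
def Kset {m : ℕ} (r : Fin m → Fin m) (i : ℕ) : Finset (Fin m) :=
  (Finset.univ.filter fun j : Fin m => m - i ≤ (j : ℕ)).image r

/-- `L_i = {r_1,…,r_i}`: the `i` indices with smallest p-values. -/
def Lset {m : ℕ} (r : Fin m → Fin m) (i : ℕ) : Finset (Fin m) :=
  (Finset.univ.filter fun j : Fin m => (j : ℕ) < i).image r

/-- `h = max{0 ≤ i ≤ m : K_i ∉ 𝒰}`. -/
noncomputable def hval {m : ℕ} (α : ℝ) (p : Fin m → ℝ) (r : Fin m → Fin m) : ℕ :=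
  sSup {i | i ≤ m ∧ ¬ SimesU α p (Kset r i)}

/-- `t(S) = max{|I| : I ⊆ S, I ∉ 𝒳}`. -/
noncomputable def tval {m : ℕ} (α : ℝ) (p : Fin m → ℝ) (S : Finset (Fin m)) : ℕ :=
  sSup {k | ∃ I, I ⊆ S ∧ ¬ ClosedX α p I ∧ I.card = k}

/-- `d(S) = |S| − t(S)`. -/
noncomputable def dval {m : ℕ} (α : ℝ) (p : Fin m → ℝ) (S : Finset (Fin m)) : ℕ :=
  S.card - tval α p S

/-- `q_α(S) = t(S)/|S|` for nonempty `S`, and `0` for `S = ∅`. -/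
noncomputable def qval {m : ℕ} (α : ℝ) (p : Fin m → ℝ) (S : Finset (Fin m)) : ℝ :=
  if S = ∅ then 0 else (tval α p S : ℝ) / S.card

/-- `z = 0` if `h = m`, else `z = min{m−h ≤ i ≤ m : h·p_{(i)} ≤ (i−m+h+1)·α}`. -/
noncomputable def zval {m : ℕ} (α : ℝ) (p : Fin m → ℝ) (r : Fin m → Fin m) : ℕ :=
  if hval α p r = m then 0 else
    sInf {i | m - hval α p r ≤ i ∧ i ≤ m ∧
      (hval α p r : ℝ) * pOrd p Finset.univ i ≤ ((i : ℝ) - m + hval α p r + 1) * α}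

/-- `b_q = max{1 ≤ i ≤ m : m·p_{(i)} ≤ i·q}` (with `b_q = 0` if no such `i`). -/
noncomputable def bval {m : ℕ} (q : ℝ) (p : Fin m → ℝ) : ℕ :=
  sSup {i | 1 ≤ i ∧ i ≤ m ∧ (m : ℝ) * pOrd p Finset.univ i ≤ (i : ℝ) * q}


section aux
variable {m : ℕ} {p : Fin m → ℝ} {r : Fin m → Fin m}

lemma map_r_univ (hr : Function.Bijective r) :
    Multiset.map r Finset.univ.val = Finset.univ.val := by
  have h1 : (Finset.univ.image r) = (Finset.univ : Finset (Fin m)) :=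
    Finset.image_univ_of_surjective hr.surjective
  have h2 : (Finset.univ.image r).val = Multiset.map r Finset.univ.val := by
    rw [Finset.image_val, Multiset.dedup_eq_self.mpr
      (Multiset.Nodup.map hr.injective Finset.univ.nodup)]
  rw [← h2, h1]

/-- sorted global list equals ofFn (p ∘ r) -/
lemma sort_univ_eq (hr : Function.Bijective r) (hmono : ∀ i j : Fin m, i ≤ j → p (r i) ≤ p (r j)) :
    ((Finset.univ.val.map p).sort (· ≤ ·)) = List.ofFn (fun j => p (r j)) := by
  refine (fun h1 h2 h3 => List.Perm.eq_of_pairwise' (r := (· ≤ · : ℝ → ℝ → Prop)) h2 h3 h1) ?_ ?_ ?_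
  · rw [← Multiset.coe_eq_coe, Multiset.sort_eq, ← Fin.univ_val_map]
    conv_lhs => rw [← map_r_univ hr]
    rw [Multiset.map_map]
    rfl
  · exact Multiset.pairwise_sort _ _
  · rw [List.pairwise_ofFn]
    exact fun {i j} hij => hmono i j hij.le

lemma pOrd_univ_eq (hr : Function.Bijective r) (hmono : ∀ i j : Fin m, i ≤ j → p (r i) ≤ p (r j))
    {i : ℕ} (h1 : 1 ≤ i) (h2 : i ≤ m) :
    pOrd p Finset.univ i = p (r ⟨i - 1, by omega⟩) := by
  rw [pOrd, sort_univ_eq hr hmono, List.getD_eq_getElem _ _ (by simp; omega),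
    List.getElem_ofFn]

end aux

section aux
variable {m : ℕ} {p : Fin m → ℝ}

lemma pOrd_le_of_count (p : Fin m → ℝ) (J : Finset (Fin m)) (x : ℝ) (j : ℕ)
    (hj : 1 ≤ j) (hc : j ≤ (J.filter (fun y => p y ≤ x)).card) :
    pOrd p J j ≤ x := by
  classical
  set s := ((J.val.map p).sort (· ≤ ·)) with hs
  have hsorted : s.Pairwise (· ≤ ·) := Multiset.pairwise_sort _ _
  have hcount : j ≤ (s.filter (fun y => decide (y ≤ x))).length := by
    have h1 : (J.filter (fun y => p y ≤ x)).card
        = Multiset.card (Multiset.filter (fun y => y ≤ x) (J.val.map p)) := by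
      rw [Finset.card_def, Finset.filter_val, Multiset.filter_map]
      rw [Multiset.card_map]
      rfl
    have h2 : Multiset.filter (fun y => y ≤ x) (J.val.map p)
        = Multiset.filter (fun y => y ≤ x) (s : Multiset ℝ) := by
      rw [hs, Multiset.sort_eq]
    rw [h1, h2] at hc
    simpa using hc
  have hlen : j - 1 < s.length := by
    have := List.length_filter_le (fun y => decide (y ≤ x)) s
    omega
  rw [pOrd, ← hs, List.getD_eq_getElem _ _ hlen]
  by_contra hlt
  push_neg at hlt
  have hdrop : (s.drop (j-1)).filter (fun y => decide (y ≤ x)) = [] := by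
    rw [List.filter_eq_nil_iff]
    intro a ha
    simp only [decide_eq_true_eq]
    intro hax
    obtain ⟨k, hk, rfl⟩ := List.getElem_of_mem ha
    rw [List.length_drop] at hk
    rw [List.getElem_drop] at hax
    have : s[j-1] ≤ s[j - 1 + k]'(by omega) := by
      rcases Nat.eq_zero_or_pos k with hk0 | hk0
      · subst hk0; simp
      · exact List.pairwise_iff_getElem.mp hsorted (j-1) (j-1+k) (by omega) (by omega) (by omega)
    exact absurd (le_trans this hax) (not_le.mpr hlt)
  have : (s.filter (fun y => decide (y ≤ x))).length ≤ j - 1 := by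
    conv_lhs => rw [← List.take_append_drop (j-1) s]
    rw [List.filter_append, List.length_append, hdrop]
    simp only [List.length_nil, Nat.add_zero]
    exact le_trans (List.length_filter_le _ _) (by simp)
  omega

end aux

section aux
variable {m : ℕ} {p : Fin m → ℝ} {r : Fin m → Fin m}

lemma card_filter_eq_length (p : Fin m → ℝ) (J : Finset (Fin m)) (q : ℝ → Prop) :
    (J.filter (fun y => q (p y))).card
      = (((J.val.map p).sort (· ≤ ·)).filter (fun y => decide (q y))).length := by
  classical
  have h1 : (J.filter (fun y => q (p y))).card
      = Multiset.card (Multiset.filter (fun y => q y) (J.val.map p)) := by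
    rw [Finset.card_def, Finset.filter_val, Multiset.filter_map, Multiset.card_map]
    rfl
  rw [h1]
  conv_lhs => rw [← Multiset.sort_eq (J.val.map p) (· ≤ · : ℝ → ℝ → Prop)]
  rw [Multiset.filter_coe, Multiset.coe_card]

lemma le_pOrd_of_count (p : Fin m → ℝ) (J : Finset (Fin m)) (x : ℝ) (j : ℕ)
    (hj : 1 ≤ j) (hjc : j ≤ J.card)
    (hc : J.card - j + 1 ≤ (J.filter (fun y => x ≤ p y)).card) :
    x ≤ pOrd p J j := by
  classical
  set s := ((J.val.map p).sort (· ≤ ·)) with hs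
  have hsorted : s.Pairwise (· ≤ ·) := Multiset.pairwise_sort _ _
  have hslen : s.length = J.card := by
    rw [hs, Multiset.length_sort, Multiset.card_map]
    rfl
  have hcount : J.card - j + 1 ≤ (s.filter (fun y => decide (x ≤ y))).length := by
    rw [card_filter_eq_length p J (fun y => x ≤ y)] at hc
    exact hc
  have hlen : j - 1 < s.length := by omega
  rw [pOrd, ← hs, List.getD_eq_getElem _ _ hlen]
  by_contra hlt
  push_neg at hlt
  have htake : (s.take j).filter (fun y => decide (x ≤ y)) = [] := by
    rw [List.filter_eq_nil_iff]
    intro a ha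
    simp only [decide_eq_true_eq]
    intro hax
    obtain ⟨k, hk, rfl⟩ := List.getElem_of_mem ha
    rw [List.length_take] at hk
    rw [List.getElem_take] at hax
    have hkj : k < j := by omega
    have hks : k < s.length := by omega
    have hle : s[k]'hks ≤ s[j-1] := by
      rcases Nat.lt_or_ge k (j-1) with hk0 | hk0
      · exact (List.pairwise_iff_getElem.mp hsorted k (j-1) (by omega) (by omega) (by omega))
      · have : k = j - 1 := by omega
        subst this; exact le_refl _
    exact absurd (le_trans hax hle) (not_le.mpr hlt)
  have : (s.filter (fun y => decide (x ≤ y))).length ≤ s.length - j := by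
    conv_lhs => rw [← List.take_append_drop j s]
    rw [List.filter_append, List.length_append, htake]
    simp only [List.length_nil, Nat.zero_add]
    exact le_trans (List.length_filter_le _ _) (by simp)
  omega

end aux

section aux
variable {m : ℕ} {p : Fin m → ℝ} {r : Fin m → Fin m}

lemma card_filter_Ico (m a c : ℕ) (hc : c ≤ m) :
    ((Finset.univ : Finset (Fin m)).filter (fun k : Fin m => a ≤ (k:ℕ) ∧ (k:ℕ) < c)).card
      = c - a := by
  have himg : ((Finset.univ : Finset (Fin m)).filter
      (fun k : Fin m => a ≤ (k:ℕ) ∧ (k:ℕ) < c)).image Fin.val = Finset.Ico a c := by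
    ext x
    simp only [Finset.mem_image, Finset.mem_filter, Finset.mem_univ, true_and, Finset.mem_Ico]
    constructor
    · rintro ⟨k, ⟨h1, h2⟩, rfl⟩; exact ⟨h1, h2⟩
    · rintro ⟨h1, h2⟩; exact ⟨⟨x, lt_of_lt_of_le h2 hc⟩, ⟨h1, h2⟩, rfl⟩
  rw [← Finset.card_image_of_injective _ Fin.val_injective, himg, Nat.card_Ico]

lemma card_Kset (hr : Function.Bijective r) {i : ℕ} (hi : i ≤ m) : (Kset r i).card = i := by
  rw [Kset, Finset.card_image_of_injective _ hr.injective]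
  have : (Finset.univ.filter fun j : Fin m => m - i ≤ (j : ℕ))
      = Finset.univ.filter (fun j : Fin m => m - i ≤ (j:ℕ) ∧ (j:ℕ) < m) := by
    apply Finset.filter_congr; intro k _; simp [k.isLt]
  rw [this, card_filter_Ico m (m - i) m le_rfl]
  omega

lemma card_Lset (hr : Function.Bijective r) {c : ℕ} (hc : c ≤ m) : (Lset r c).card = c := by
  rw [Lset, Finset.card_image_of_injective _ hr.injective]
  have : (Finset.univ.filter fun j : Fin m => (j:ℕ) < c)
      = Finset.univ.filter (fun j : Fin m => 0 ≤ (j:ℕ) ∧ (j:ℕ) < c) := by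
    apply Finset.filter_congr; intro k _; simp
  rw [this, card_filter_Ico m 0 c hc]; omega

lemma mem_Lset {y : Fin m} {c : ℕ} : y ∈ Lset r c ↔ ∃ k : Fin m, (k:ℕ) < c ∧ r k = y := by
  simp only [Lset, Finset.mem_image, Finset.mem_filter, Finset.mem_univ, true_and]

lemma mem_Kset_of {k : Fin m} {i : ℕ} (h : m - i ≤ (k:ℕ)) : r k ∈ Kset r i := by
  simp only [Kset, Finset.mem_image, Finset.mem_filter, Finset.mem_univ, true_and]
  exact ⟨k, h, rfl⟩

lemma card_Lset_inter_Kset (hr : Function.Bijective r) {b h : ℕ} (hb : b ≤ m) :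
    (Lset r b ∩ Kset r h).card = b - (m - h) := by
  rw [Lset, Kset, ← Finset.image_inter _ _ hr.injective,
    Finset.card_image_of_injective _ hr.injective, ← Finset.filter_and]
  have : (Finset.univ.filter fun j : Fin m => (j:ℕ) < b ∧ m - h ≤ (j : ℕ))
      = Finset.univ.filter (fun j : Fin m => m - h ≤ (j:ℕ) ∧ (j:ℕ) < b) := by
    apply Finset.filter_congr; intro k _; simp [and_comm]
  rw [this, card_filter_Ico m (m - h) b hb]

end aux

section bounds
variable {m : ℕ} {p : Fin m → ℝ} {r : Fin m → Fin m}

lemma pOrd_univ_nonneg (hr : Function.Bijective r)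
    (hmono : ∀ i j : Fin m, i ≤ j → p (r i) ≤ p (r j)) (hp : ∀ i, 0 ≤ p i)
    {i : ℕ} (h1 : 1 ≤ i) (h2 : i ≤ m) : 0 ≤ pOrd p Finset.univ i := by
  rw [pOrd_univ_eq hr hmono h1 h2]; exact hp _

lemma pOrd_univ_mono (hr : Function.Bijective r)
    (hmono : ∀ i j : Fin m, i ≤ j → p (r i) ≤ p (r j))
    {i i' : ℕ} (h1 : 1 ≤ i) (h2 : i ≤ i') (h3 : i' ≤ m) :
    pOrd p Finset.univ i ≤ pOrd p Finset.univ i' := by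
  rw [pOrd_univ_eq hr hmono h1 (le_trans h2 h3), pOrd_univ_eq hr hmono (le_trans h1 h2) h3]
  exact hmono _ _ (by simp [Fin.le_def]; omega)

/-- family 2 bound: `p_{(j:J)} ≤ p_{(m - |J| + j)}`. -/
lemma bound2 (hr : Function.Bijective r)
    (hmono : ∀ i j : Fin m, i ≤ j → p (r i) ≤ p (r j))
    (J : Finset (Fin m)) {j : ℕ} (hj1 : 1 ≤ j) (hjc : j ≤ J.card) :
    pOrd p J j ≤ pOrd p Finset.univ (m - J.card + j) := by
  have hJm : J.card ≤ m := by
    simpa using Finset.card_le_card (Finset.subset_univ J)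
  set g := m - J.card + j with hg
  have hg1 : 1 ≤ g := by omega
  have hgm : g ≤ m := by omega
  set x := pOrd p Finset.univ g with hx
  apply pOrd_le_of_count p J x j hj1
  have hneg : (J.filter (fun y => ¬ (p y ≤ x))) ⊆
      (Finset.univ.filter (fun k : Fin m => g ≤ (k:ℕ) ∧ (k:ℕ) < m)).image r := by
    intro y hy
    rw [Finset.mem_filter] at hy
    obtain ⟨k, rfl⟩ := hr.surjective y
    refine Finset.mem_image.mpr ⟨k, Finset.mem_filter.mpr ⟨Finset.mem_univ _, ?_, k.isLt⟩, rfl⟩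
    by_contra hcon
    push_neg at hcon
    have : p (r k) ≤ x := by
      rw [hx, pOrd_univ_eq hr hmono hg1 hgm]
      exact hmono _ _ (by simp [Fin.le_def]; omega)
    exact hy.2 this
  have hnegcard : (J.filter (fun y => ¬ (p y ≤ x))).card ≤ J.card - j := by
    calc (J.filter (fun y => ¬ (p y ≤ x))).card
        ≤ ((Finset.univ.filter (fun k : Fin m => g ≤ (k:ℕ) ∧ (k:ℕ) < m)).image r).card :=
          Finset.card_le_card hneg
      _ = m - g := by
          rw [Finset.card_image_of_injective _ hr.injective, card_filter_Ico m g m le_rfl]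
      _ = J.card - j := by omega
  have := Finset.card_filter_add_card_filter_not (s := J) (p := fun y => p y ≤ x)
  omega

/-- family 1 bound via `Lset`. -/
lemma bound1 (hr : Function.Bijective r)
    (hmono : ∀ i j : Fin m, i ≤ j → p (r i) ≤ p (r j))
    (J : Finset (Fin m)) {b u j : ℕ} (hbm : b ≤ m) (hub : u ≤ b) (hj1 : 1 ≤ j) (hju : j ≤ u)
    (hcard : u ≤ (J ∩ Lset r b).card) :
    pOrd p J j ≤ pOrd p Finset.univ (b - u + j) := by
  set g := b - u + j with hg
  have hg1 : 1 ≤ g := by omega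
  have hgb : g ≤ b := by omega
  set x := pOrd p Finset.univ g with hx
  set A := J ∩ Lset r b with hA
  apply pOrd_le_of_count p J x j hj1
  have hneg : (A.filter (fun y => ¬ (p y ≤ x))) ⊆
      (Finset.univ.filter (fun k : Fin m => g ≤ (k:ℕ) ∧ (k:ℕ) < b)).image r := by
    intro y hy
    rw [Finset.mem_filter] at hy
    have hyL : y ∈ Lset r b := (Finset.mem_inter.mp hy.1).2
    obtain ⟨k, hkb, rfl⟩ := mem_Lset.mp hyL
    refine Finset.mem_image.mpr ⟨k, Finset.mem_filter.mpr ⟨Finset.mem_univ _, ?_, hkb⟩, rfl⟩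
    by_contra hcon
    push_neg at hcon
    have : p (r k) ≤ x := by
      rw [hx, pOrd_univ_eq hr hmono hg1 (le_trans hgb hbm)]
      exact hmono _ _ (by simp [Fin.le_def]; omega)
    exact hy.2 this
  have hnegcard : (A.filter (fun y => ¬ (p y ≤ x))).card ≤ u - j := by
    calc (A.filter (fun y => ¬ (p y ≤ x))).card
        ≤ ((Finset.univ.filter (fun k : Fin m => g ≤ (k:ℕ) ∧ (k:ℕ) < b)).image r).card :=
          Finset.card_le_card hneg
      _ = b - g := by
          rw [Finset.card_image_of_injective _ hr.injective, card_filter_Ico m g b hbm]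
      _ = u - j := by omega
  have hsplit := Finset.card_filter_add_card_filter_not (s := A) (p := fun y => p y ≤ x)
  have hmonoA : (A.filter (fun y => p y ≤ x)).card ≤ (J.filter (fun y => p y ≤ x)).card :=
    Finset.card_le_card (Finset.filter_subset_filter _ Finset.inter_subset_left)
  omega

/-- global order stat lower-bounds Kset order stat. -/
lemma pOrd_univ_le_Kset (hr : Function.Bijective r)
    (hmono : ∀ i j : Fin m, i ≤ j → p (r i) ≤ p (r j))
    {i j : ℕ} (hi : i ≤ m) (hj1 : 1 ≤ j) (hji : j ≤ i) :
    pOrd p Finset.univ (m - i + j) ≤ pOrd p (Kset r i) j := by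
  set g := m - i + j with hg
  have hg1 : 1 ≤ g := by omega
  have hgm : g ≤ m := by omega
  set x := pOrd p Finset.univ g with hx
  have hcardK : (Kset r i).card = i := card_Kset hr hi
  apply le_pOrd_of_count p _ x j hj1 (by omega)
  rw [hcardK]
  have hsub : (Finset.univ.filter (fun k : Fin m => g - 1 ≤ (k:ℕ) ∧ (k:ℕ) < m)).image r ⊆
      (Kset r i).filter (fun y => x ≤ p y) := by
    intro y hy
    obtain ⟨k, hk, rfl⟩ := Finset.mem_image.mp hy
    rw [Finset.mem_filter] at hk
    refine Finset.mem_filter.mpr ⟨mem_Kset_of (by omega), ?_⟩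
    rw [hx, pOrd_univ_eq hr hmono hg1 hgm]
    exact hmono _ _ (by simp [Fin.le_def]; omega)
  calc i - j + 1 = m - (g - 1) := by omega
    _ = ((Finset.univ.filter (fun k : Fin m => g - 1 ≤ (k:ℕ) ∧ (k:ℕ) < m)).image r).card := by
        rw [Finset.card_image_of_injective _ hr.injective, card_filter_Ico m (g-1) m le_rfl]
    _ ≤ _ := Finset.card_le_card hsub

end bounds

section basics
variable {m : ℕ} {α : ℝ} {p : Fin m → ℝ} {r : Fin m → Fin m}

lemma SimesU_empty : ¬ SimesU α p (∅ : Finset (Fin m)) := by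
  rintro ⟨i, h1, h2, -⟩
  simp only [Finset.card_empty] at h2
  omega

lemma Kset_zero : Kset r 0 = (∅ : Finset (Fin m)) := by
  rw [Kset]
  convert Finset.image_empty r
  rw [Finset.filter_eq_empty_iff]
  intro k _
  simp only [not_le, Nat.sub_zero]
  exact k.isLt

lemma Kset_m (hr : Function.Bijective r) : Kset r m = (Finset.univ : Finset (Fin m)) := by
  rw [Kset]
  have : (Finset.univ.filter fun j : Fin m => m - m ≤ (j : ℕ)) = Finset.univ := by
    rw [Finset.filter_eq_self]; intro k _; omega
  rw [this, Finset.image_univ_of_surjective hr.surjective]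

end basics

set_option maxHeartbeats 2000000 in
lemma stmt12_aux
    (m : ℕ) (hm : 1 ≤ m) (α : ℝ) (hα : 0 ≤ α ∧ α ≤ 1)
    (p : Fin m → ℝ) (hp : ∀ i, 0 ≤ p i ∧ p i ≤ 1)
    (r : Fin m → Fin m) (hr : Function.Bijective r)
    (hmono : ∀ i j : Fin m, i ≤ j → p (r i) ≤ p (r j)) :
    (hval α p r < m ↔ 0 < bval α p) ∧
    (hval α p r < m →
      dval α p (Lset r (bval α p)) = m - hval α p r ∧
      qval α p (Lset r (bval α p)) =
        ((bval α p : ℝ) - m + hval α p r) / (bval α p : ℝ) ∧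
      qval α p (Lset r (bval α p)) < 1) := by

  obtain ⟨hα0, -⟩ := hα
  have cardU : (Finset.univ : Finset (Fin m)).card = m := by simp
  set h := hval α p r with hhdef
  set b := bval α p with hbdef
  -- h facts
  set hS : Set ℕ := {i | i ≤ m ∧ ¬ SimesU α p (Kset r i)} with hhS
  have hS0 : 0 ∈ hS := ⟨Nat.zero_le m, by rw [Kset_zero]; exact SimesU_empty⟩
  have hS_ne : hS.Nonempty := ⟨0, hS0⟩
  have hS_bdd : BddAbove hS := ⟨m, fun x hx => hx.1⟩
  have hval_eq : h = sSup hS := rfl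
  have hmem : h ∈ hS := hval_eq ▸ Nat.sSup_mem hS_ne hS_bdd
  have hhm : h ≤ m := hmem.1
  have hKh : ¬ SimesU α p (Kset r h) := hmem.2
  have hP1 : ∀ i, h < i → i ≤ m → SimesU α p (Kset r i) := by
    intro i hi him
    by_contra hcon
    have : i ≤ h := by rw [hval_eq]; exact le_csSup hS_bdd ⟨him, hcon⟩
    omega
  -- b facts
  set bS : Set ℕ := {i | 1 ≤ i ∧ i ≤ m ∧ (m:ℝ) * pOrd p Finset.univ i ≤ (i:ℝ) * α} with hbS
  have bS_bdd : BddAbove bS := ⟨m, fun x hx => hx.2.1⟩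
  have bval_eq : b = sSup bS := rfl
  -- part 1
  have part1 : h < m ↔ 0 < b := by
    constructor
    · intro hlt
      obtain ⟨i, h1, h2, h3⟩ := hP1 m hlt le_rfl
      rw [Kset_m hr, cardU] at h2 h3
      have hi : i ∈ bS := ⟨h1, h2, h3⟩
      have := le_csSup bS_bdd hi
      rw [bval_eq]; omega
    · intro hpos
      have bS_ne : bS.Nonempty := by
        by_contra hcon
        rw [Set.not_nonempty_iff_eq_empty] at hcon
        rw [bval_eq, hcon] at hpos
        simp at hpos
      have hbmem : b ∈ bS := bval_eq ▸ Nat.sSup_mem bS_ne bS_bdd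
      have hU : SimesU α p Finset.univ :=
        ⟨b, hbmem.1, by rw [cardU]; exact hbmem.2.1, by rw [cardU]; exact hbmem.2.2⟩
      by_contra hcon
      have heq : h = m := by omega
      rw [heq, Kset_m hr] at hKh
      exact hKh hU
  refine ⟨part1, fun hhlt => ?_⟩
  have hbpos : 0 < b := part1.mp hhlt
  have bS_ne : bS.Nonempty := by
    by_contra hcon
    rw [Set.not_nonempty_iff_eq_empty] at hcon
    rw [bval_eq, hcon] at hbpos
    simp at hbpos
  have hbmem : b ∈ bS := bval_eq ▸ Nat.sSup_mem bS_ne bS_bdd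
  obtain ⟨hb1, hbm, hP2⟩ := hbmem
  have hP3 : ∀ i, b < i → i ≤ m → (i:ℝ) * α < (m:ℝ) * pOrd p Finset.univ i := by
    intro i hbi him
    by_contra hcon
    push_neg at hcon
    have : i ≤ b := by rw [bval_eq]; exact le_csSup bS_bdd ⟨by omega, him, hcon⟩
    omega
  -- m - h ≤ b
  have hbmh : m - h ≤ b := by
    by_contra hcon0
    push_neg at hcon0
    have hKnot : ¬ SimesU α p (Kset r (m - b)) := by
      rintro ⟨j, hj1, hjc, hj⟩
      rw [card_Kset hr (by omega)] at hjc hj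
      have hK := pOrd_univ_le_Kset hr hmono (i := m - b) (j := j) (by omega) hj1 hjc
      have hrank : m - (m - b) + j = b + j := by omega
      rw [hrank] at hK
      set X := pOrd p Finset.univ (b + j) with hX
      have hXnn : 0 ≤ X := pOrd_univ_nonneg hr hmono (fun i => (hp i).1) (by omega) (by omega)
      have hkey : ((m - b : ℕ):ℝ) * X ≤ (j:ℝ) * α :=
        le_trans (mul_le_mul_of_nonneg_left hK (by positivity)) hj
      have hc0 : (0:ℝ) < ((m - b : ℕ):ℝ) := by
        have : 1 ≤ m - b := by omega
        exact_mod_cast Nat.lt_of_lt_of_le Nat.zero_lt_one this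
      have hceq : ((m - b : ℕ):ℝ) = (m:ℝ) - b := by
        rw [Nat.cast_sub (by omega)]
      have hbjm : (b:ℝ) + j ≤ (m:ℝ) := by exact_mod_cast (show b + j ≤ m by omega)
      have hnat : (j:ℝ) * m ≤ ((b:ℝ) + j) * ((m:ℝ) - b) := by nlinarith [hbjm, (show (0:ℝ) ≤ b by positivity)]
      have hbj : b + j ∈ bS := by
        refine ⟨by omega, by omega, ?_⟩
        have e1 : ((m:ℝ) - b) * X * m ≤ (j:ℝ) * α * m := by
          rw [← hceq]
          exact mul_le_mul_of_nonneg_right hkey (by positivity)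
        have e2 : (j:ℝ) * m * α ≤ (((b:ℝ) + j) * ((m:ℝ) - b)) * α :=
          mul_le_mul_of_nonneg_right hnat hα0
        have e3 : ((m:ℝ) - b) * ((m:ℝ) * X) ≤ ((m:ℝ) - b) * (((b:ℝ) + j) * α) := by nlinarith [e1, e2]
        have e4 := le_of_mul_le_mul_left e3 (by rw [← hceq]; exact hc0)
        push_cast
        linarith [e4]
      have := le_csSup bS_bdd hbj
      rw [← bval_eq] at this
      omega
    have : m - b ≤ h := by rw [hval_eq]; exact le_csSup hS_bdd ⟨by omega, hKnot⟩
    omega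
  -- K_{h+1} witness
  obtain ⟨j₀, hj01, hj0c, hj0⟩ := hP1 (h + 1) (by omega) (by omega)
  rw [card_Kset hr (by omega)] at hj0c hj0
  have hKb := pOrd_univ_le_Kset hr hmono (i := h + 1) (j := j₀) (by omega) hj01 hj0c
  set ρ := m - (h + 1) + j₀ with hρdef
  set X0 := pOrd p Finset.univ ρ with hX0def
  have hρ1 : 1 ≤ ρ := by omega
  have hρm : ρ ≤ m := by omega
  have hX0nn : 0 ≤ X0 := pOrd_univ_nonneg hr hmono (fun i => (hp i).1) hρ1 hρm
  have hkey0 : ((h:ℝ) + 1) * X0 ≤ (j₀:ℝ) * α := by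
    have h5 := mul_le_mul_of_nonneg_left hKb (show (0:ℝ) ≤ ((h + 1 : ℕ):ℝ) by positivity)
    push_cast at h5 hj0 ⊢
    linarith
  set u := b + h + 1 - m with hudef
  have hu1 : 1 ≤ u := by omega
  have hub : u ≤ b := by omega
  have hj0u : j₀ ≤ u := by
    by_contra hcon
    push_neg at hcon
    have hρb : b < ρ := by omega
    have h3 := hP3 ρ hρb hρm
    rw [← hX0def] at h3
    have hcast : (j₀:ℝ) = (ρ:ℝ) - m + h + 1 := by
      have hnat : ρ + h + 1 = m + j₀ := by omega
      have := congrArg (Nat.cast : ℕ → ℝ) hnat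
      push_cast at this
      linarith
    rw [hcast] at hkey0
    have hρm' : (ρ:ℝ) ≤ m := by exact_mod_cast hρm
    have hhm' : (h:ℝ) + 1 ≤ m := by exact_mod_cast (show h + 1 ≤ m by omega)
    have e1 := mul_lt_mul_of_pos_left h3 (show (0:ℝ) < (h:ℝ) + 1 by positivity)
    have e2 := mul_le_mul_of_nonneg_left hkey0 (show (0:ℝ) ≤ (m:ℝ) by positivity)
    have hfac : (m:ℝ) * (((ρ:ℝ) - m + h + 1) * α) ≤ ((h:ℝ) + 1) * ((ρ:ℝ) * α) := by
      have key : (0:ℝ) ≤ α * ((m:ℝ) - ρ) * ((m:ℝ) - (h + 1)) :=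
        mul_nonneg (mul_nonneg hα0 (by linarith)) (by linarith)
      nlinarith [key]
    linarith [e1, e2, hfac]
  -- the key: any I ⊆ Lset r b with u ≤ |I| is in 𝒳
  have hclosed : ∀ I : Finset (Fin m), I ⊆ Lset r b → u ≤ I.card → ClosedX α p I := by
    intro I hIL hIc J hIJ
    have hIJc : I.card ≤ J.card := Finset.card_le_card hIJ
    have hJm : J.card ≤ m := by simpa using Finset.card_le_card (Finset.subset_univ J)
    by_cases hcase : J.card ≤ h + 1
    · refine ⟨j₀, hj01, by omega, ?_⟩
      have hcap : u ≤ (J ∩ Lset r b).card :=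
        le_trans hIc (Finset.card_le_card (Finset.subset_inter hIJ hIL))
      have h1 : pOrd p J j₀ ≤ pOrd p Finset.univ (b - u + j₀) :=
        bound1 hr hmono J hbm hub hj01 hj0u hcap
      have hbu : b - u + j₀ = ρ := by omega
      rw [hbu, ← hX0def] at h1
      have hJ0 : (0:ℝ) ≤ (J.card:ℝ) := by positivity
      have c1 : (J.card:ℝ) * pOrd p J j₀ ≤ (J.card:ℝ) * X0 := mul_le_mul_of_nonneg_left h1 hJ0
      have c2 : (J.card:ℝ) * X0 ≤ ((h:ℝ) + 1) * X0 := by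
        apply mul_le_mul_of_nonneg_right _ hX0nn
        exact_mod_cast (show (J.card:ℕ) ≤ h + 1 from hcase)
      linarith [hkey0]
    · push_neg at hcase
      obtain ⟨j, hj1, hjc, hj⟩ := hP1 J.card (by omega) hJm
      rw [card_Kset hr hJm] at hjc hj
      refine ⟨j, hj1, hjc, ?_⟩
      have h1 : pOrd p J j ≤ pOrd p Finset.univ (m - J.card + j) := bound2 hr hmono J hj1 hjc
      have h2 : pOrd p Finset.univ (m - J.card + j) ≤ pOrd p (Kset r J.card) j :=
        pOrd_univ_le_Kset hr hmono hJm hj1 hjc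
      have hJ0 : (0:ℝ) ≤ (J.card:ℝ) := by positivity
      calc (J.card:ℝ) * pOrd p J j ≤ (J.card:ℝ) * pOrd p (Kset r J.card) j :=
            mul_le_mul_of_nonneg_left (le_trans h1 h2) hJ0
        _ ≤ (j:ℝ) * α := hj
  -- tval computation
  set S := Lset r b with hSdef
  have cardL : S.card = b := card_Lset hr hbm
  set tS : Set ℕ := {k | ∃ I, I ⊆ S ∧ ¬ ClosedX α p I ∧ I.card = k} with htSdef
  have tS_bdd : BddAbove tS := by
    refine ⟨m, ?_⟩
    rintro k ⟨I, -, -, rfl⟩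
    simpa using Finset.card_le_card (Finset.subset_univ I)
  have tS_ne : tS.Nonempty :=
    ⟨0, ∅, Finset.empty_subset _,
      (fun hX => SimesU_empty (hX ∅ (Finset.Subset.refl _))), Finset.card_empty⟩
  have tval_eq : tval α p S = sSup tS := rfl
  have ht_ub : ∀ k ∈ tS, k ≤ b - (m - h) := by
    rintro k ⟨I, hIS, hnX, rfl⟩
    by_contra hcon
    push_neg at hcon
    exact hnX (hclosed I hIS (by omega))
  have ht_lb : b - (m - h) ∈ tS := by
    refine ⟨S ∩ Kset r h, Finset.inter_subset_left, ?_, ?_⟩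
    · intro hX
      exact hKh (hX (Kset r h) Finset.inter_subset_right)
    · rw [hSdef]
      exact card_Lset_inter_Kset hr hbm
  have ht : tval α p S = b - (m - h) := by
    rw [tval_eq]
    exact le_antisymm (csSup_le tS_ne ht_ub) (le_csSup tS_bdd ht_lb)
  have hd : dval α p S = m - h := by
    simp only [dval, cardL, ht]
    omega
  have hSne : S ≠ ∅ := by
    intro hcon
    rw [hcon] at cardL
    simp at cardL
    omega
  have hcast : ((b - (m - h) : ℕ):ℝ) = (b:ℝ) - m + h := by
    rw [Nat.cast_sub (by omega : m - h ≤ b), Nat.cast_sub (by omega : h ≤ m)]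
    ring
  have hq : qval α p S = ((b:ℝ) - m + h) / (b:ℝ) := by
    rw [qval, if_neg hSne, ht, cardL, hcast]
  refine ⟨hd, hq, ?_⟩
  rw [hq, div_lt_one (by exact_mod_cast hbpos)]
  have h6 : (h:ℝ) < m := by exact_mod_cast hhlt
  linarith


theorem stmt12
    (m : ℕ) (hm : 1 ≤ m) (α : ℝ) (hα : 0 ≤ α ∧ α ≤ 1)
    (p : Fin m → ℝ) (hp : ∀ i, 0 ≤ p i ∧ p i ≤ 1)
    (r : Fin m → Fin m) (hr : Function.Bijective r)
    (hmono : ∀ i j : Fin m, i ≤ j → p (r i) ≤ p (r j)) :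
    (hval α p r < m ↔ 0 < bval α p) ∧
    (hval α p r < m →
      dval α p (Lset r (bval α p)) = m - hval α p r ∧
      qval α p (Lset r (bval α p)) =
        ((bval α p : ℝ) - m + hval α p r) / (bval α p : ℝ) ∧
      qval α p (Lset r (bval α p)) < 1) :=
  stmt12_aux m hm α hα p hp r hr hmono
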